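/- With the setup of the difference operators Δ_u = T_u − I for commuting isometries T_u on a Banach space, one has the operator identity Δ_{2u}^n = 2^n Δ_u^n + ∑_{j=0}^{n} C(n,j) ∑_{i=0}^{j−1} T_{iu} Δ_u^{n+1}, where T_{iu} = (T_u)^i and C(n,j) is the binomial coefficient. Consequently, ω(n, ε) ≤ (n/2) ω(n+1, ε) + 2^{−n} ω(n, 2ε) for the modulus ω(n,ε) = sup_{0<|u|≤ε} ‖Δ_u^n x‖. -/

import Mathlib

lemma key6 {R : Type*} [CommRing R] (a : R) (n : ℕ) :
    (a ^ 2 - 1) ^ n = 2 ^ n * (a - 1) ^ n +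
      ∑ j ∈ Finset.range (n + 1), (n.choose j : R) *
        ∑ i ∈ Finset.range j, a ^ i * (a - 1) ^ (n + 1) := by
  have h : ∀ j : ℕ, ∑ i ∈ Finset.range j, a ^ i * (a - 1) ^ (n + 1)
      = (a ^ j - 1) * (a - 1) ^ n := by
    intro j
    calc ∑ i ∈ Finset.range j, a ^ i * (a - 1) ^ (n + 1)
        = (∑ i ∈ Finset.range j, a ^ i) * (a - 1) ^ (n + 1) := (Finset.sum_mul _ _ _).symm
      _ = ((∑ i ∈ Finset.range j, a ^ i) * (a - 1)) * (a - 1) ^ n := by rw [pow_succ]; ring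
      _ = (a ^ j - 1) * (a - 1) ^ n := by rw [geom_sum_mul]
  simp only [h]
  have h2 : ∑ j ∈ Finset.range (n + 1), (n.choose j : R) * ((a ^ j - 1) * (a - 1) ^ n)
      = ((a + 1) ^ n - 2 ^ n) * (a - 1) ^ n := by
    have hap : (a + 1) ^ n = ∑ j ∈ Finset.range (n + 1), (n.choose j : R) * a ^ j := by
      rw [add_pow]
      exact Finset.sum_congr rfl fun j _ => by ring
    have hs : (2 : R) ^ n = ∑ j ∈ Finset.range (n + 1), (n.choose j : R) := by
      rw [← Nat.cast_sum, Nat.sum_range_choose]; push_cast; ring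
    rw [hap, hs, ← Finset.sum_sub_distrib, Finset.sum_mul]
    exact Finset.sum_congr rfl fun j _ => by ring
  rw [h2]
  have : (a ^ 2 - 1 : R) = (a + 1) * (a - 1) := by ring
  rw [this, mul_pow]; ring

lemma sum_j_choose (n : ℕ) (hn : 0 < n) :
    ∑ j ∈ Finset.range (n + 1), (j : ℝ) * (n.choose j : ℝ) = n * 2 ^ (n - 1) := by
  obtain ⟨m, rfl⟩ := Nat.exists_eq_add_of_lt hn
  simp only [zero_add]
  rw [Finset.sum_range_succ']
  have : ∀ j ∈ Finset.range (m + 1), ((j:ℝ) + 1) * ((m+1).choose (j+1) : ℝ)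
      = (m + 1 : ℝ) * (m.choose j : ℝ) := by
    intro j _
    have h1 : ((m+1) * m.choose j : ℕ) = ((m+1).choose (j+1) * (j+1) : ℕ) :=
      Nat.add_one_mul_choose_eq m j
    have h2 : ((m:ℝ)+1) * (m.choose j : ℝ) = ((m+1).choose (j+1) : ℝ) * ((j:ℝ)+1) := by
      exact_mod_cast h1
    linear_combination -h2
  rw [Finset.sum_congr rfl fun j hj => by push_cast; rw [this j hj]]
  rw [← Finset.mul_sum]
  have : ∑ j ∈ Finset.range (m + 1), (m.choose j : ℝ) = 2 ^ m := by
    rw [← Nat.cast_sum, Nat.sum_range_choose]; push_cast; ring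
  rw [this]
  simp

/-- the operator identity
Δ_{2u}^n = 2^n Δ_u^n + ∑_{j=0}^{n} C(n,j) ∑_{i=0}^{j−1} T_{iu} Δ_u^{n+1},
for commuting isometries T with T_{u+v} = T_u T_v, T_0 = I, Δ_u = T_u − I; and consequently
ω(n, ε) ≤ (n/2) ω(n+1, ε) + 2^{−n} ω(n, 2ε), where ω(n,ε) = sup_{0<|u|≤ε} ‖Δ_u^n x‖. -/
theorem stmt6 (d : ℕ) (X : Type*) [NormedAddCommGroup X] [NormedSpace ℝ X]
    (T : EuclideanSpace ℝ (Fin d) → (X →L[ℝ] X))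
    (hiso : ∀ u y, ‖T u y‖ = ‖y‖)
    (hadd : ∀ u v, T (u + v) = T u * T v)
    (h0 : T 0 = 1)
    (x : X) (n : ℕ) (hn : 0 < n) :
    (∀ u : EuclideanSpace ℝ (Fin d),
      (T ((2 : ℝ) • u) - 1) ^ n
        = (2 : ℝ) ^ n • (T u - 1) ^ n
          + ∑ j ∈ Finset.range (n + 1), (n.choose j : ℝ) •
              ∑ i ∈ Finset.range j, T ((i : ℝ) • u) * (T u - 1) ^ (n + 1)) ∧
    (∀ ε : ℝ, 0 < ε →
      sSup {r : ℝ | ∃ u : EuclideanSpace ℝ (Fin d),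
          0 < ‖u‖ ∧ ‖u‖ ≤ ε ∧ r = ‖((T u - 1) ^ n) x‖}
        ≤ ((n : ℝ) / 2) *
            sSup {r : ℝ | ∃ u : EuclideanSpace ℝ (Fin d),
              0 < ‖u‖ ∧ ‖u‖ ≤ ε ∧ r = ‖((T u - 1) ^ (n + 1)) x‖}
          + (2 : ℝ) ^ (-(n : ℤ)) *
            sSup {r : ℝ | ∃ u : EuclideanSpace ℝ (Fin d),
              0 < ‖u‖ ∧ ‖u‖ ≤ 2 * ε ∧ r = ‖((T u - 1) ^ n) x‖}) := by
  -- Part 1: the operator identity.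
  have hId : ∀ u : EuclideanSpace ℝ (Fin d),
      (T ((2 : ℝ) • u) - 1) ^ n
        = (2 : ℝ) ^ n • (T u - 1) ^ n
          + ∑ j ∈ Finset.range (n + 1), (n.choose j : ℝ) •
              ∑ i ∈ Finset.range j, T ((i : ℝ) • u) * (T u - 1) ^ (n + 1) := by
    intro u
    have hpow : ∀ i : ℕ, T ((i : ℝ) • u) = (T u) ^ i := by
      intro i
      induction i with
      | zero => simpa using h0
      | succ i ih =>
        have hsm : (((i + 1 : ℕ)) : ℝ) • u = u + (i : ℝ) • u := by
          push_cast
          rw [add_smul, one_smul, add_comm]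
        rw [hsm, hadd, ih, pow_succ']
    have h2u : T ((2 : ℝ) • u) = (T u) ^ 2 := by
      rw [two_smul, hadd, sq]
    have hk := congrArg (Polynomial.aeval (T u)) (key6 (Polynomial.X : Polynomial ℝ) n)
    simp only [map_add, map_sub, map_mul, map_pow, map_sum, map_one, map_ofNat,
      Polynomial.aeval_X, Polynomial.aeval_natCast] at hk
    have sm1 : ((2 : ℝ) ^ n) • ((T u - 1) ^ n) = ((2 : X →L[ℝ] X)) ^ n * (T u - 1) ^ n := by
      rw [Algebra.smul_def, map_pow, map_ofNat]
    have sm2 : ∀ (j : ℕ) (B : X →L[ℝ] X), ((n.choose j : ℝ)) • B = ((n.choose j : X →L[ℝ] X)) * B := by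
      intro j B
      rw [Algebra.smul_def, map_natCast]
    rw [h2u, sm1]
    simp only [hpow, sm2]
    exact hk
  refine ⟨hId, ?_⟩
  -- Norm bound for powers of the difference operator.
  have hTnorm : ∀ (u : EuclideanSpace ℝ (Fin d)) (y : X), ‖(T u - 1) y‖ ≤ 2 * ‖y‖ := by
    intro u y
    have : (T u - 1) y = T u y - y := by simp
    rw [this]
    calc ‖T u y - y‖ ≤ ‖T u y‖ + ‖y‖ := norm_sub_le _ _
      _ = 2 * ‖y‖ := by rw [hiso]; ring
  have hbound : ∀ (k : ℕ) (u : EuclideanSpace ℝ (Fin d)) (y : X),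
      ‖((T u - 1) ^ k) y‖ ≤ 2 ^ k * ‖y‖ := by
    intro k u
    induction k with
    | zero => intro y; simp
    | succ k ih =>
      intro y
      rw [pow_succ]
      calc ‖((T u - 1) ^ k * (T u - 1)) y‖ = ‖((T u - 1) ^ k) ((T u - 1) y)‖ := by
            rw [ContinuousLinearMap.mul_apply]
        _ ≤ 2 ^ k * ‖(T u - 1) y‖ := ih _
        _ ≤ 2 ^ k * (2 * ‖y‖) := by
            have := hTnorm u y
            nlinarith [norm_nonneg ((T u - 1) y), norm_nonneg y, pow_pos (by norm_num : (0:ℝ) < 2) k]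
        _ = 2 ^ (k + 1) * ‖y‖ := by ring
  -- Pointwise inequality.
  have hpt : ∀ u : EuclideanSpace ℝ (Fin d),
      ‖((T u - 1) ^ n) x‖ ≤ ((n : ℝ) / 2) * ‖((T u - 1) ^ (n + 1)) x‖
        + (2 : ℝ) ^ (-(n : ℤ)) * ‖((T ((2 : ℝ) • u) - 1) ^ n) x‖ := by
    intro u
    set M : ℝ := ‖((T u - 1) ^ (n + 1)) x‖ with hM
    set S : X →L[ℝ] X := ∑ j ∈ Finset.range (n + 1), (n.choose j : ℝ) •
        ∑ i ∈ Finset.range j, T ((i : ℝ) • u) * (T u - 1) ^ (n + 1) with hS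
    have hM0 : 0 ≤ M := norm_nonneg _
    have hSx : ‖S x‖ ≤ ((n : ℝ) * 2 ^ (n - 1)) * M := by
      rw [hS, ContinuousLinearMap.sum_apply]
      refine le_trans (norm_sum_le _ _) ?_
      have hterm : ∀ j ∈ Finset.range (n + 1),
          ‖(((n.choose j : ℝ)) • ∑ i ∈ Finset.range j, T ((i : ℝ) • u) * (T u - 1) ^ (n + 1)) x‖
            ≤ (n.choose j : ℝ) * ((j : ℝ) * M) := by
        intro j _
        rw [ContinuousLinearMap.smul_apply, norm_smul, Real.norm_natCast]
        have hin : ‖(∑ i ∈ Finset.range j, T ((i : ℝ) • u) * (T u - 1) ^ (n + 1)) x‖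
            ≤ (j : ℝ) * M := by
          rw [ContinuousLinearMap.sum_apply]
          refine le_trans (norm_sum_le _ _) ?_
          have : ∀ i ∈ Finset.range j,
              ‖(T ((i : ℝ) • u) * (T u - 1) ^ (n + 1)) x‖ = M := by
            intro i _
            rw [ContinuousLinearMap.mul_apply, hiso]
          rw [Finset.sum_congr rfl this, Finset.sum_const, Finset.card_range,
            nsmul_eq_mul]
        exact mul_le_mul_of_nonneg_left hin (by positivity)
      calc ∑ j ∈ Finset.range (n + 1),
            ‖(((n.choose j : ℝ)) • ∑ i ∈ Finset.range j, T ((i : ℝ) • u) * (T u - 1) ^ (n + 1)) x‖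
          ≤ ∑ j ∈ Finset.range (n + 1), (n.choose j : ℝ) * ((j : ℝ) * M) :=
            Finset.sum_le_sum hterm
        _ = (∑ j ∈ Finset.range (n + 1), (j : ℝ) * (n.choose j : ℝ)) * M := by
            rw [Finset.sum_mul]
            exact Finset.sum_congr rfl fun j _ => by ring
        _ = ((n : ℝ) * 2 ^ (n - 1)) * M := by rw [sum_j_choose n hn]
    have happ := congrArg (fun B : X →L[ℝ] X => B x) (hId u)
    simp only [ContinuousLinearMap.add_apply, ContinuousLinearMap.smul_apply] at happ
    -- happ : (T(2u)-1)^n x = 2^n • ((Tu-1)^n x) + S x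
    have e1 : ((2 : ℝ) ^ n) • (((T u - 1) ^ n) x) = ((T ((2 : ℝ) • u) - 1) ^ n) x - S x := by
      rw [happ]; rw [hS]; abel
    have e2 : (2 : ℝ) ^ n * ‖((T u - 1) ^ n) x‖
        ≤ ‖((T ((2 : ℝ) • u) - 1) ^ n) x‖ + ((n : ℝ) * 2 ^ (n - 1)) * M := by
      have : ‖((2 : ℝ) ^ n) • (((T u - 1) ^ n) x)‖ = (2 : ℝ) ^ n * ‖((T u - 1) ^ n) x‖ := by
        rw [norm_smul]
        simp [abs_of_pos (by positivity : (0:ℝ) < (2:ℝ)^n)]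
      rw [← this, e1]
      exact le_trans (norm_sub_le _ _) (by gcongr)
    have hzpow : (2 : ℝ) ^ (-(n : ℤ)) = ((2 : ℝ) ^ n)⁻¹ := by
      rw [zpow_neg, zpow_natCast]
    rw [hzpow]
    have hP : (0 : ℝ) < 2 ^ n := by positivity
    have hhalf : ((n : ℝ)) * 2 ^ (n - 1) = (n : ℝ) / 2 * 2 ^ n := by
      have : (2 : ℝ) ^ (n - 1) * 2 = 2 ^ n := by
        rw [← pow_succ]
        congr 1
        omega
      field_simp
      linear_combination this
    rw [hhalf] at e2
    have := mul_le_mul_of_nonneg_left e2 (le_of_lt (inv_pos.mpr hP))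
    calc ‖((T u - 1) ^ n) x‖ = ((2:ℝ)^n)⁻¹ * ((2:ℝ)^n * ‖((T u - 1) ^ n) x‖) := by
          field_simp
      _ ≤ ((2:ℝ)^n)⁻¹ * (‖((T ((2 : ℝ) • u) - 1) ^ n) x‖ + ((n : ℝ) / 2 * 2 ^ n) * M) := this
      _ = ((n : ℝ) / 2) * M + ((2:ℝ)^n)⁻¹ * ‖((T ((2 : ℝ) • u) - 1) ^ n) x‖ := by
          field_simp; ring
  -- Part 2.
  intro ε hε
  set S2 : Set ℝ := {r : ℝ | ∃ u : EuclideanSpace ℝ (Fin d),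
      0 < ‖u‖ ∧ ‖u‖ ≤ ε ∧ r = ‖((T u - 1) ^ (n + 1)) x‖} with hS2
  set S3 : Set ℝ := {r : ℝ | ∃ u : EuclideanSpace ℝ (Fin d),
      0 < ‖u‖ ∧ ‖u‖ ≤ 2 * ε ∧ r = ‖((T u - 1) ^ n) x‖} with hS3
  have bdd2 : BddAbove S2 := by
    refine ⟨2 ^ (n + 1) * ‖x‖, ?_⟩
    rintro r ⟨u, _, _, rfl⟩
    exact hbound (n + 1) u x
  have bdd3 : BddAbove S3 := by
    refine ⟨2 ^ n * ‖x‖, ?_⟩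
    rintro r ⟨u, _, _, rfl⟩
    exact hbound n u x
  have nn2 : 0 ≤ sSup S2 := Real.sSup_nonneg (by rintro r ⟨u, _, _, rfl⟩; positivity)
  have nn3 : 0 ≤ sSup S3 := Real.sSup_nonneg (by rintro r ⟨u, _, _, rfl⟩; positivity)
  apply Real.sSup_le
  · rintro r ⟨u, hu0, huε, rfl⟩
    have mem2 : ‖((T u - 1) ^ (n + 1)) x‖ ∈ S2 := ⟨u, hu0, huε, rfl⟩
    have mem3 : ‖((T ((2 : ℝ) • u) - 1) ^ n) x‖ ∈ S3 := by
      refine ⟨(2 : ℝ) • u, ?_, ?_, rfl⟩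
      · rw [norm_smul, Real.norm_ofNat]; linarith
      · rw [norm_smul]
        simp only [Real.norm_ofNat]
        linarith
    calc ‖((T u - 1) ^ n) x‖
        ≤ ((n : ℝ) / 2) * ‖((T u - 1) ^ (n + 1)) x‖
          + (2 : ℝ) ^ (-(n : ℤ)) * ‖((T ((2 : ℝ) • u) - 1) ^ n) x‖ := hpt u
      _ ≤ ((n : ℝ) / 2) * sSup S2 + (2 : ℝ) ^ (-(n : ℤ)) * sSup S3 := by
          gcongr
          · exact le_csSup bdd2 mem2
          · exact le_csSup bdd3 mem3
  · positivity
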